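/- Suppose O_i and O_k are d-separated given W ∪ S where W ⊆ O \ {O_i, O_k}, every proper subset V ⊂ W containing R = {O_j} ∪ Sep(O_i,O_k) d-connects O_i and O_k given V ∪ S, every member of Sep(O_i,O_k) is an ancestor of {O_i, O_k} ∪ S, O_l ∈ W, and O_l is not an ancestor of {O_i} ∪ S nor of {O_k} ∪ S. Then O_l is an ancestor of O_j. -/

import Mathlib

open List

variable {V : Type*}

/-- Ancestor relation: directed path or equality. -/
def Anc (E : V → V → Prop) : V → V → Prop := Relation.ReflTransGen E

/-- `x` is an ancestor of some member of the set `T`. -/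
def AncSet (E : V → V → Prop) (T : Set V) (x : V) : Prop := ∃ y ∈ T, Anc E x y

/-- Undirected adjacency underlying a directed graph. -/
def Adjacent (E : V → V → Prop) (x y : V) : Prop := E x y ∨ E y x

/-- An (undirected) path in the directed graph: consecutive vertices adjacent, no repeats. -/
def IsTrail (E : V → V → Prop) (l : List V) : Prop := l.Chain' (Adjacent E) ∧ l.Nodup

/-- `b` is a collider between `a` and `c`: both edges point into `b`. -/
def ColliderTriple (E : V → V → Prop) (a b c : V) : Prop := E a b ∧ E c b

/-- A path from `x` to `y` that is active (d-connecting) given the conditioning set `C`. -/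
def ActivePath (E : V → V → Prop) (C : Set V) (l : List V) (x y : V) : Prop :=
  IsTrail E l ∧ l.head? = some x ∧ l.getLast? = some y ∧
  (∀ a b c, [a, b, c] <:+: l → ColliderTriple E a b c → ∃ d ∈ C, Anc E b d) ∧
  (∀ a b c, [a, b, c] <:+: l → ¬ ColliderTriple E a b c → b ∉ C)

/-- d-connection given a conditioning set. -/
def DConn (E : V → V → Prop) (C : Set V) (x y : V) : Prop := ∃ l, ActivePath E C l x y

/-- d-separation given a conditioning set. -/
def DSep (E : V → V → Prop) (C : Set V) (x y : V) : Prop := ¬ DConn E C x y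

/-- An inducing path between `x` and `y` relative to latent set `L` and selection set `S`. -/
def InducingPath (E : V → V → Prop) (L S : Set V) (l : List V) (x y : V) : Prop :=
  IsTrail E l ∧ l.head? = some x ∧ l.getLast? = some y ∧
  (∀ a b c, [a, b, c] <:+: l → ColliderTriple E a b c → AncSet E ({x, y} ∪ S) b) ∧
  (∀ a b c, [a, b, c] <:+: l → ¬ ColliderTriple E a b c → b ∈ L)

def HasInducingPath (E : V → V → Prop) (L S : Set V) (x y : V) : Prop :=
  ∃ l, InducingPath E L S l x y

/-- The path ends with an arrowhead at its last vertex (is "into" its last vertex). -/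
def IntoLast (E : V → V → Prop) (l : List V) : Prop := ∃ p a b, l = p ++ [a, b] ∧ E a b

/-- The path is into its first vertex. -/
def IntoHead (E : V → V → Prop) (l : List V) : Prop := ∃ a b t, l = a :: b :: t ∧ E b a

/-- The path is out of its first vertex. -/
def OutHead (E : V → V → Prop) (l : List V) : Prop := ∃ a b t, l = a :: b :: t ∧ E a b

/-- The path is out of its last vertex. -/
def OutLast (E : V → V → Prop) (l : List V) : Prop := ∃ p a b, l = p ++ [a, b] ∧ E b a

/-- Membership in D-SEP(x,y). -/
def InDSEP (E : V → V → Prop) (O L S : Set V) (x y k : V) : Prop :=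
  ∃ σ : List V, σ.head? = some x ∧ σ.getLast? = some k ∧ σ.Nodup ∧
    (∀ v ∈ σ, v ∈ O ∧ AncSet E ({x, y} ∪ S) v) ∧
    σ.Chain' (HasInducingPath E L S) ∧
    (∀ a b c, [a, b, c] <:+: σ →
      (∃ l, InducingPath E L S l a b ∧ IntoLast E l) ∧
      (∃ l, InducingPath E L S l c b ∧ IntoLast E l))

/-- A mixed graph: symmetric adjacency together with arrowhead marks.
`arrow x y` means the edge between `x` and `y` has an arrowhead at `y`. -/
structure Mixed (V : Type*) where
  adj : V → V → Prop
  arrow : V → V → Prop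

/-- v-structure `a *→ b ←* c` with `a, c` non-adjacent. -/
def VStruct (H : Mixed V) (a b c : V) : Prop :=
  H.adj a b ∧ H.adj b c ∧ ¬ H.adj a c ∧ H.arrow a b ∧ H.arrow c b

def TriangleIn (H : Mixed V) (a b c : V) : Prop := H.adj a b ∧ H.adj b c ∧ H.adj a c

/-- Membership in PD-SEP(x) of a mixed graph. -/
def InPDSEP (H : Mixed V) (x k : V) : Prop :=
  ∃ pa : List V, pa.head? = some x ∧ pa.getLast? = some k ∧ pa.Nodup ∧ pa.Chain' H.adj ∧
    ∀ a b c, [a, b, c] <:+: pa → VStruct H a b c ∨ TriangleIn H a b c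

/-- The MAAG of a directed graph with latent set `L` and selection set `S`:
adjacency iff an inducing path exists, arrowhead at `y` iff `y ∉ Anc({x} ∪ S)`. -/
def MAAG (E : V → V → Prop) (L S : Set V) : Mixed V where
  adj := fun x y => x ≠ y ∧ HasInducingPath E L S x y
  arrow := fun x y => (x ≠ y ∧ HasInducingPath E L S x y) ∧ ¬ AncSet E (insert x S) y

/-- Undirected (tail-tail) edge of the MAAG. -/
def UndirMAAG (E : V → V → Prop) (L S : Set V) (a b : V) : Prop :=
  (a ≠ b ∧ HasInducingPath E L S a b) ∧ AncSet E (insert b S) a ∧ AncSet E (insert a S) b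

/-- Every edge of the path incident to `v` is into `v`. -/
def EdgesIntoAt (E : V → V → Prop) (l : List V) (v : V) : Prop :=
  ∀ a b, [a, b] <:+: l → (a = v → E b v) ∧ (b = v → E a v)

/-- Every edge of the path incident to `v` is out of `v`. -/
def EdgesOutAt (E : V → V → Prop) (l : List V) (v : V) : Prop :=
  ∀ a b, [a, b] <:+: l → (a = v → E v b) ∧ (b = v → E v a)

/-- Key structural lemma: if a path starts with an edge out of `v`, then `v` is an ancestor
of the last vertex or of some collider target. -/
lemma out_anc (E : V → V → Prop) (C : Set V) :
    ∀ (t : List V) (v w y : V), E v w → List.Chain' (Adjacent E) (v :: w :: t) →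
    (∀ a b c, [a, b, c] <:+: (v :: w :: t) → ColliderTriple E a b c → ∃ d ∈ C, Anc E b d) →
    (w :: t).getLast? = some y →
    ∃ d ∈ insert y C, Anc E v d := by
  intro t
  induction t with
  | nil =>
    intro v w y hvw _ _ hlast
    simp only [List.getLast?_singleton, Option.some.injEq] at hlast
    subst hlast
    exact ⟨w, Set.mem_insert _ _, Relation.ReflTransGen.single hvw⟩
  | cons u t' ih =>
    intro v w y hvw hch hcol hlast
    have hadj : Adjacent E w u := (List.isChain_cons_cons.mp (List.isChain_cons_cons.mp hch).2).1
    rcases hadj with hwu | huw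
    · obtain ⟨d, hd, hanc⟩ := ih w u y hwu (List.isChain_cons_cons.mp hch).2
        (fun a b c hin hc => hcol a b c (hin.trans (List.suffix_cons v _).isInfix) hc)
        (by simpa using hlast)
      exact ⟨d, hd, Relation.ReflTransGen.head hvw hanc⟩
    · have : ColliderTriple E v w u := ⟨hvw, huw⟩
      obtain ⟨d, hd, hanc⟩ := hcol v w u ⟨[], t', rfl⟩ this
      exact ⟨d, Set.mem_insert_of_mem _ hd, Relation.ReflTransGen.head hvw hanc⟩

/-- Every vertex on an active path given `C` is an ancestor of `{x, y} ∪ C`. -/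
lemma mem_active_anc (E : V → V → Prop) (C : Set V) (lp : List V) (x y : V)
    (h : ActivePath E C lp x y) (v : V) (hv : v ∈ lp) :
    ∃ d ∈ ({x, y} : Set V) ∪ C, Anc E v d := by
  obtain ⟨p, q, rfl⟩ := List.append_of_mem hv
  obtain ⟨hch, -⟩ := h.1
  match q, p with
  | [], p =>
    -- v is the last vertex
    have hy : v = y := by
      have := h.2.2.1
      rwa [List.getLast?_concat, Option.some_inj] at this
    exact ⟨y, Or.inl (Set.mem_insert_of_mem _ rfl), hy ▸ Relation.ReflTransGen.refl⟩
  | c :: q', [] =>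
    -- v is the first vertex
    have hx : v = x := by
      have := h.2.1
      simp at this
      exact this
    exact ⟨x, Or.inl (Set.mem_insert _ _), hx ▸ Relation.ReflTransGen.refl⟩
  | c :: q', p₀ :: p₁ =>
    obtain ⟨p', a, hpa⟩ := List.eq_nil_or_concat (p₀ :: p₁) |>.resolve_left (by simp)
    rw [List.concat_eq_append] at hpa
    rw [hpa] at h hv hch
    have hin : [a, v, c] <:+: (p' ++ [a]) ++ v :: c :: q' := ⟨p', q', by simp⟩
    have hch3 : List.Chain' (Adjacent E) [a, v, c] := hch.infix hin
    have hav : Adjacent E a v := (List.isChain_cons_cons.mp hch3).1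
    have hvc : Adjacent E v c := (List.isChain_cons_cons.mp (List.isChain_cons_cons.mp hch3).2).1
    by_cases hcol : ColliderTriple E a v c
    · obtain ⟨d, hd, hanc⟩ := h.2.2.2.1 a v c hin hcol
      exact ⟨d, Or.inr hd, hanc⟩
    · have hout : E v a ∨ E v c := by
        rcases hav with h1 | h1
        · rcases hvc with h2 | h2
          · exact Or.inr h2
          · exact absurd ⟨h1, h2⟩ hcol
        · exact Or.inl h1
      rcases hout with hva | hvc'
      · -- go left: use the reversed path
        have hrev : ((p' ++ [a]) ++ v :: c :: q').reverse
            = (c :: q').reverse ++ v :: a :: p'.reverse := by simp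
        have hchr : List.Chain' (Adjacent E) (v :: a :: p'.reverse) := by
          have : List.Chain' (Adjacent E) (((p' ++ [a]) ++ v :: c :: q').reverse) := by
            apply List.isChain_reverse.mpr
            exact hch.imp (fun _ _ hab => hab.symm)
          rw [hrev] at this
          exact this.suffix ⟨(c :: q').reverse, rfl⟩
        have hcolr : ∀ a' b' c', [a', b', c'] <:+: (v :: a :: p'.reverse) →
            ColliderTriple E a' b' c' → ∃ d ∈ C, Anc E b' d := by
          intro a' b' c' hin' hc'
          have h1 : [a', b', c'] <:+: ((p' ++ [a]) ++ v :: c :: q').reverse := by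
            rw [hrev]
            exact hin'.trans (List.IsSuffix.isInfix ⟨(c :: q').reverse, rfl⟩)
          have h2 : [c', b', a'] <:+: ((p' ++ [a]) ++ v :: c :: q') := by
            have := List.reverse_infix.mpr h1
            simpa using this
          exact h.2.2.2.1 c' b' a' h2 ⟨hc'.2, hc'.1⟩
        have hlastr : (a :: p'.reverse).getLast? = some x := by
          have h1 : ((p' ++ [a]) ++ v :: c :: q').reverse.getLast? = some x := by
            rw [List.getLast?_reverse]; exact h.2.1
          rw [hrev, List.getLast?_append_of_ne_nil _ (by simp)] at h1
          simpa using h1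
        obtain ⟨d, hd, hanc⟩ := out_anc E C p'.reverse v a x hva hchr hcolr hlastr
        rcases hd with hd | hd
        · exact ⟨x, Or.inl (hd ▸ Set.mem_insert _ _), hd ▸ hanc⟩
        · exact ⟨d, Or.inr hd, hanc⟩
      · -- go right: the suffix starting at v
        have hsuf : (v :: c :: q') <:+ ((p' ++ [a]) ++ v :: c :: q') := ⟨p' ++ [a], rfl⟩
        have hchs : List.Chain' (Adjacent E) (v :: c :: q') := hch.suffix hsuf
        have hcols : ∀ a' b' c', [a', b', c'] <:+: (v :: c :: q') →
            ColliderTriple E a' b' c' → ∃ d ∈ C, Anc E b' d :=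
          fun a' b' c' hin' hc' => h.2.2.2.1 a' b' c' (hin'.trans hsuf.isInfix) hc'
        have hlasts : (c :: q').getLast? = some y := by
          have h1 := h.2.2.1
          rw [show (p' ++ [a]) ++ v :: c :: q' = ((p' ++ [a]) ++ [v]) ++ c :: q' by simp,
            List.getLast?_append_of_ne_nil _ (by simp)] at h1
          exact h1
        obtain ⟨d, hd, hanc⟩ := out_anc E C q' v c y hvc' hchs hcols hlasts
        rcases hd with hd | hd
        · exact ⟨y, Or.inl (hd ▸ Set.mem_insert_of_mem _ rfl), hd ▸ hanc⟩
        · exact ⟨d, Or.inr hd, hanc⟩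

/-- second part of the lemma on orienting with non-minimal d-separating sets.
With `R = {j} ∪ Sep(i,k) ⊆ W`, minimality of `W` relative to `R`, all members of `Sep(i,k)`
ancestors of `{i,k} ∪ S`, `l ∈ W`, and `l` not an ancestor of `i ∪ S` nor of `k ∪ S`,
it follows that `l` is an ancestor of `j`. -/
theorem stmt11 (E : V → V → Prop) (O L S : Set V)
    (hOL : Disjoint O L) (hOS : Disjoint O S) (hLS : Disjoint L S)
    (hcover : ∀ v : V, v ∈ O ∨ v ∈ L ∨ v ∈ S)
    (i j k l : V) (W Sep : Set V)
    (hSepO : Sep ⊆ O \ {i, k})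
    (hSepAnc : ∀ v ∈ Sep, AncSet E ({i, k} ∪ S) v)
    (hW : W ⊆ O \ {i, k}) (hRW : insert j Sep ⊆ W)
    (hmin : ∀ V' : Set V, V' ⊂ W → insert j Sep ⊆ V' → DConn E (V' ∪ S) i k)
    (hsep : DSep E (W ∪ S) i k)
    (hl : l ∈ W)
    (hla : ¬ AncSet E (insert i S) l) (hlb : ¬ AncSet E (insert k S) l) :
    Anc E l j := by
  classical
  -- The ancestor-closed target set
  set T : Set V := insert i (insert j (insert k (Sep ∪ S))) with hT
  set A : Set V := {v | ∃ d ∈ T, Anc E v d} with hA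
  -- A is closed under ancestry towards {i,k} ∪ ((W ∩ A) ∪ S)
  have hclosed : ∀ b, (∃ d ∈ ({i, k} : Set V) ∪ ((W ∩ A) ∪ S), Anc E b d) → b ∈ A := by
    rintro b ⟨d, hd, hbd⟩
    rcases hd with (hd | hd) | (⟨-, hdA⟩ | hd)
    · exact ⟨i, Set.mem_insert _ _, hd ▸ hbd⟩
    · exact ⟨k, by simp [hT], (Set.mem_singleton_iff.mp hd) ▸ hbd⟩
    · obtain ⟨e, he, hde⟩ := hdA
      exact ⟨e, he, hbd.trans hde⟩
    · exact ⟨d, by simp [hT, hd], hbd⟩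
  -- W ∩ A still d-separates i and k given (W ∩ A) ∪ S
  have hW'' : ¬ DConn E ((W ∩ A) ∪ S) i k := by
    rintro ⟨lp, hap⟩
    apply hsep
    refine ⟨lp, hap.1, hap.2.1, hap.2.2.1, ?_, ?_⟩
    · intro a b c hin hc
      obtain ⟨d, hd, hanc⟩ := hap.2.2.2.1 a b c hin hc
      exact ⟨d, by rcases hd with ⟨h1, -⟩ | h1; exacts [Or.inl h1, Or.inr h1], hanc⟩
    · intro a b c hin hnc hbWS
      have hbmem : b ∈ lp := hin.subset (by simp)
      have hbA : b ∈ A := hclosed b (mem_active_anc E _ lp i k hap b hbmem)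
      have hnb := hap.2.2.2.2 a b c hin hnc
      rcases hbWS with hbW | hbS
      · exact hnb (Or.inl ⟨hbW, hbA⟩)
      · exact hnb (Or.inr hbS)
  -- minimality forces W ⊆ A
  have hWA : W ⊆ A := by
    by_contra hcon
    obtain ⟨w, hwW, hwA⟩ := Set.not_subset.mp hcon
    have hss : W ∩ A ⊂ W := ⟨Set.inter_subset_left, fun hsub =>
      hwA (hsub hwW).2⟩
    have hRA : insert j Sep ⊆ W ∩ A := by
      intro r hr
      refine ⟨hRW hr, ?_⟩
      rcases hr with rfl | hr
      · exact ⟨r, by simp [hT], Relation.ReflTransGen.refl⟩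
      · obtain ⟨z, hz, hrz⟩ := hSepAnc r hr
        rcases hz with (hz | hz) | hz
        · exact ⟨i, Set.mem_insert _ _, hz ▸ hrz⟩
        · exact ⟨k, by simp [hT], (Set.mem_singleton_iff.mp hz) ▸ hrz⟩
        · exact ⟨z, by simp [hT, hz], hrz⟩
    exact hW'' (hmin (W ∩ A) hss hRA)
  -- conclude: l ∈ A, and only the j-case survives
  obtain ⟨d, hd, hld⟩ := hWA hl
  rcases hd with rfl | rfl | rfl | hd | hd
  · exact absurd ⟨d, Set.mem_insert _ _, hld⟩ hla
  · exact hld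
  · exact absurd ⟨d, Set.mem_insert _ _, hld⟩ hlb
  · obtain ⟨z, hz, hdz⟩ := hSepAnc d hd
    rcases hz with (rfl | hz) | hz
    · exact absurd ⟨z, Set.mem_insert _ _, hld.trans hdz⟩ hla
    · exact absurd ⟨k, Set.mem_insert _ _, (Set.mem_singleton_iff.mp hz) ▸ (hld.trans hdz)⟩ hlb
    · exact absurd ⟨z, Set.mem_insert_of_mem _ hz, hld.trans hdz⟩ hla
  · exact absurd ⟨d, Set.mem_insert_of_mem _ hd, hld⟩ hla
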